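/- Fix an integer D ≥ 3. Let Σ_ε ∈ ℝ^{d_y×d_y} and Σ_x ∈ ℝ^{d_x×d_x} be symmetric positive definite, V ∈ ℝ^{d_y×d_x}, and set V' = Σ_ε^{1/2} V Σ_x^{1/2} with singular value decomposition V' = L S Rᵀ, where S ∈ ℝ^{d×d} is diagonal with nonnegative entries, L ∈ ℝ^{d_y×d}, R ∈ ℝ^{d_x×d} satisfy LᵀL = RᵀR = I_d, and Tr S > 0. Let U_1,…,U_{D−1} be matrices of appropriate sizes with U_iᵀU_i = I_d, and define the weights W_D = Σ_ε^{−1/2} L Σ_D U_{D−1}ᵀ, W_i = U_i Σ_i U_{i−1}ᵀ for i = 2,…,D−1, and W_1 = U_1 Σ_1 Rᵀ Σ_x^{−1/2}, where Σ_1 = (Tr S)^{−(D−2)/(2D)} (Tr Σ_x)^{(D−1)/(2D)} (Tr Σ_ε)^{−1/(2D)} S^{1/2}, Σ_D = (Tr S)^{−(D−2)/(2D)} (Tr Σ_ε)^{(D−1)/(2D)} (Tr Σ_x)^{−1/(2D)} S^{1/2}, and Σ_i = (Tr S)^{1/D} (Tr Σ_ε · Tr Σ_x)^{−1/(2D)}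 I_d for 2 ≤ i ≤ D−1. Then the sharpness T = Σ_{k=1}^D Tr[A_kᵀA_k]·Tr[B_k Σ_x B_kᵀ] (with A_k = W_D⋯W_{k+1}, A_D = I, B_k = W_{k−1}⋯W_1, B_1 = I) equals (D−1)·(Tr S)^{(D−2)/D}·(Tr Σ_ε · Tr Σ_x)^{1/D}·Tr[Σ_ε^{−1} L S Lᵀ] + d_y·(Tr S)^{2(D−1)/D}·(Tr Σ_x)^{1/D}/(Tr Σ_ε)^{(D−1)/D}. -/

import Mathlib

open Matrix Finset

/-- The product `W_{i+l-1} ⋯ W_i` of a chain of matrices with dimensions `d`. -/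
def mulChain (d : ℕ → ℕ) (W : ∀ k, Matrix (Fin (d (k + 1))) (Fin (d k)) ℝ) (i : ℕ) :
    (l : ℕ) → Matrix (Fin (d (i + l))) (Fin (d i)) ℝ
  | 0 => (1 : Matrix (Fin (d i)) (Fin (d i)) ℝ)
  | l + 1 => W (i + l) * mulChain d W i l

/-- The product `W_{l-1} ⋯ W_0` of the first `l` matrices of a chain. -/
def prodUpTo (d : ℕ → ℕ) (W : ∀ k, Matrix (Fin (d (k + 1))) (Fin (d k)) ℝ) :
    (l : ℕ) → Matrix (Fin (d l)) (Fin (d 0)) ℝ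
  | 0 => 1
  | l + 1 => W l * prodUpTo d W l

/-- The sharpness `T = Σ_{k=1}^D Tr[A_kᵀA_k]·Tr[B_k Sx B_kᵀ]` of a `D`-layer deep
linear network (`A_k = W_D⋯W_{k+1}`, `A_D = I`; `B_k = W_{k−1}⋯W_1`, `B_1 = I`);
indices are 0-based here: the paper's `W_k` is `W (k-1)`. -/
noncomputable def sharpnessT (d : ℕ → ℕ) (W : ∀ k, Matrix (Fin (d (k + 1))) (Fin (d k)) ℝ)
    (Sx : Matrix (Fin (d 0)) (Fin (d 0)) ℝ) (D : ℕ) : ℝ :=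
  ∑ k ∈ Finset.range D,
    ((mulChain d W (k + 1) (D - (k + 1)))ᵀ * mulChain d W (k + 1) (D - (k + 1))).trace *
      (prodUpTo d W k * Sx * (prodUpTo d W k)ᵀ).trace

/-- The positive semidefinite square root of a positive semidefinite matrix (the definition
`Matrix.PosSemidef.sqrt` of the older Mathlib, removed since). -/
noncomputable def Matrix.PosSemidef.sqrt {n : Type*} [Fintype n] [DecidableEq n] 
    {A : Matrix n n ℝ} (hA : A.PosSemidef) : Matrix n n ℝ :=
  (hA.1.eigenvectorUnitary : Matrix n n ℝ) * diagonal (Real.sqrt ∘ hA.1.eigenvalues) *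
    (star hA.1.eigenvectorUnitary : Matrix n n ℝ)

/-- The entrywise square root of a (diagonal, entrywise nonnegative) matrix. -/
noncomputable def entrywiseSqrt {m : ℕ} (S : Matrix (Fin m) (Fin m) ℝ) :
    Matrix (Fin m) (Fin m) ℝ :=
  Matrix.of fun i j => Real.sqrt (S i j)

section Aux

lemma famU_cast {p : ℕ} (d : ℕ → ℕ) (U : ∀ i : ℕ, Matrix (Fin (d i)) (Fin p) ℝ)
    {i j : ℕ} (h : i = j) : U i = (U j).submatrix (Fin.cast (congrArg d h)) id := by
  subst h; rfl

lemma famW_cast (d : ℕ → ℕ) (W : ∀ k, Matrix (Fin (d (k + 1))) (Fin (d k)) ℝ)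
    {i j : ℕ} (h : i = j) :
    W i = (W j).submatrix (Fin.cast (congrArg (fun s => d (s + 1)) h))
      (Fin.cast (congrArg d h)) := by
  subst h; rfl

lemma submatrix_cast_mul {a b p q : ℕ} (h : a = b) (M : Matrix (Fin b) (Fin p) ℝ)
    (N : Matrix (Fin p) (Fin q) ℝ) :
    M.submatrix (Fin.cast h) id * N = (M * N).submatrix (Fin.cast h) id := by
  subst h; rfl

lemma submatrix_cast_mul_transpose {a b c c' q : ℕ} (h1 : a = b) (h2 : c' = c)
    (M : Matrix (Fin b) (Fin q) ℝ) (Uq : Matrix (Fin c) (Fin q) ℝ) :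
    (M * Uqᵀ).submatrix (Fin.cast h1) (Fin.cast h2)
      = M.submatrix (Fin.cast h1) id * ((Uq.submatrix (Fin.cast h2) id)ᵀ) := by
  subst h1; subst h2; rfl

lemma trace_submatrix_cast {a b q : ℕ} (h : a = b) (Z : Matrix (Fin b) (Fin q) ℝ) :
    ((Z.submatrix (Fin.cast h) id)ᵀ * Z.submatrix (Fin.cast h) id).trace
      = (Zᵀ * Z).trace := by
  subst h; rfl

lemma trace_submatrix_cast2 {a b p q : ℕ} (h1 : a = b) (h2 : p = q)
    (Z : Matrix (Fin b) (Fin q) ℝ) :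
    ((Z.submatrix (Fin.cast h1) (Fin.cast h2))ᵀ * Z.submatrix (Fin.cast h1) (Fin.cast h2)).trace
      = (Zᵀ * Z).trace := by
  subst h1; subst h2; rfl

lemma log_eq_imp {a b : ℝ} (ha : 0 < a) (hb : 0 < b) (h : Real.log a = Real.log b) :
    a = b := by
  rw [← Real.exp_log ha, ← Real.exp_log hb, h]

lemma trace_pos_of_posDef {n : ℕ} (hn : 0 < n) {A : Matrix (Fin n) (Fin n) ℝ}
    (hA : A.PosDef) : 0 < A.trace := by
  have hdiag : ∀ i, 0 < A i i := by
    intro i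
    haveI : Nontrivial ℝ := inferInstance
    exact hA.diag_pos
  rw [Matrix.trace]
  exact Finset.sum_pos (fun i _ => hdiag i)
    (by simpa [Finset.univ_nonempty_iff, Fin.pos_iff_nonempty] using hn)

lemma conj_inv_one {nx p : ℕ} (Sx Q : Matrix (Fin nx) (Fin nx) ℝ)
    (R : Matrix (Fin nx) (Fin p) ℝ) (hQ : Q * Q = Sx) (hQt : Qᵀ = Q)
    (hQu : IsUnit Q.det) (hR : Rᵀ * R = 1) :
    (Rᵀ * Q⁻¹) * Sx * (Rᵀ * Q⁻¹)ᵀ = 1 := by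
  rw [transpose_mul, transpose_nonsing_inv, hQt, transpose_transpose, ← hQ]
  calc Rᵀ * Q⁻¹ * (Q * Q) * (Q⁻¹ * R)
      = Rᵀ * ((Q⁻¹ * Q) * ((Q * Q⁻¹) * R)) := by
        simp only [Matrix.mul_assoc]
    _ = 1 := by rw [Matrix.nonsing_inv_mul _ hQu, Matrix.mul_nonsing_inv _ hQu,
        Matrix.one_mul, Matrix.one_mul, hR]

lemma inv_mul_inv_eq {ny : ℕ} (Se Q : Matrix (Fin ny) (Fin ny) ℝ) (hQ : Q * Q = Se) :
    Q⁻¹ * Q⁻¹ = Se⁻¹ := by rw [← hQ, Matrix.mul_inv_rev]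

lemma trace_G {ny p j : ℕ} (Se Qe : Matrix (Fin ny) (Fin ny) ℝ)
    (L : Matrix (Fin ny) (Fin p) ℝ) (P S : Matrix (Fin p) (Fin p) ℝ)
    (Uj : Matrix (Fin j) (Fin p) ℝ)
    (hQinv : Qe⁻¹ * Qe⁻¹ = Se⁻¹) (hQt : Qeᵀ = Qe) (hPt : Pᵀ = P) (hPP : P * P = S)
    (hUj : Ujᵀ * Uj = 1) :
    ((Qe⁻¹ * L * P * Ujᵀ)ᵀ * (Qe⁻¹ * L * P * Ujᵀ)).trace
      = (Se⁻¹ * (L * S * Lᵀ)).trace := by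
  calc ((Qe⁻¹ * L * P * Ujᵀ)ᵀ * (Qe⁻¹ * L * P * Ujᵀ)).trace
      = ((Qe⁻¹ * L * P * Ujᵀ) * (Qe⁻¹ * L * P * Ujᵀ)ᵀ).trace := Matrix.trace_mul_comm _ _
    _ = (Qe⁻¹ * (L * (S * (Lᵀ * Qe⁻¹)))).trace := by
        simp only [Matrix.transpose_mul, Matrix.transpose_transpose,
          Matrix.transpose_nonsing_inv, hQt, hPt, Matrix.mul_assoc]
        rw [← Matrix.mul_assoc Ujᵀ Uj, hUj, Matrix.one_mul, ← Matrix.mul_assoc P P, hPP]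
    _ = (Se⁻¹ * (L * S * Lᵀ)).trace := by
        conv_rhs => rw [← hQinv, Matrix.mul_assoc Qe⁻¹ Qe⁻¹, Matrix.trace_mul_comm]
        simp only [Matrix.mul_assoc]

lemma trace_B {nx p j : ℕ} (Sx : Matrix (Fin nx) (Fin nx) ℝ)
    (X : Matrix (Fin p) (Fin nx) ℝ) (P S : Matrix (Fin p) (Fin p) ℝ)
    (Uj : Matrix (Fin j) (Fin p) ℝ)
    (hXSX : X * Sx * Xᵀ = 1) (hPt : Pᵀ = P) (hPP : P * P = S) (hUj : Ujᵀ * Uj = 1) :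
    ((Uj * (P * X)) * Sx * (Uj * (P * X))ᵀ).trace = S.trace := by
  have key : (Uj * (P * X)) * Sx * (Uj * (P * X))ᵀ = Uj * (S * Ujᵀ) := by
    simp only [Matrix.transpose_mul, hPt, Matrix.mul_assoc]
    congr 1
    rw [← Matrix.mul_assoc Sx Xᵀ, ← Matrix.mul_assoc X (Sx * Xᵀ),
      ← Matrix.mul_assoc X Sx, hXSX, Matrix.one_mul,
      ← Matrix.mul_assoc P P, hPP]
  rw [key, ← Matrix.mul_assoc, Matrix.trace_mul_cycle, hUj, Matrix.one_mul]

lemma psd_sqrt_mul_self {n : Type*} [Fintype n] [DecidableEq n] {A : Matrix n n ℝ}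
    (hA : A.PosSemidef) : Matrix.PosSemidef.sqrt hA * Matrix.PosSemidef.sqrt hA = A := by
  have hs : (star hA.1.eigenvectorUnitary : Matrix n n ℝ) * hA.1.eigenvectorUnitary = 1 :=
    Unitary.coe_star_mul_self _
  unfold Matrix.PosSemidef.sqrt
  calc _ = (hA.1.eigenvectorUnitary : Matrix n n ℝ) * (diagonal (Real.sqrt ∘ hA.1.eigenvalues)
        * ((star hA.1.eigenvectorUnitary : Matrix n n ℝ) * hA.1.eigenvectorUnitary)
        * diagonal (Real.sqrt ∘ hA.1.eigenvalues)) * (star hA.1.eigenvectorUnitary : Matrix n n ℝ) := by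
        simp only [Matrix.mul_assoc]
    _ = A := by
        rw [hs, Matrix.mul_one, diagonal_mul_diagonal]
        conv_rhs => rw [hA.1.spectral_theorem]
        rw [Unitary.conjStarAlgAut_apply]
        congr 2
        ext i j
        simp [diagonal_apply, Real.mul_self_sqrt (hA.eigenvalues_nonneg i)]

lemma psd_sqrt_transpose {n : Type*} [Fintype n] [DecidableEq n] {A : Matrix n n ℝ}
    (hA : A.PosSemidef) : (Matrix.PosSemidef.sqrt hA)ᵀ = Matrix.PosSemidef.sqrt hA := by
  unfold Matrix.PosSemidef.sqrt
  have h1 : (star hA.1.eigenvectorUnitary : Matrix n n ℝ)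
      = (hA.1.eigenvectorUnitary : Matrix n n ℝ)ᵀ := by
    rw [star_eq_conjTranspose, conjTranspose_eq_transpose_of_trivial]
  rw [h1, transpose_mul, transpose_mul, transpose_transpose, diagonal_transpose, Matrix.mul_assoc]

end Aux

/-- The sharpness of the SGD-selected (minimal-fluctuation) global minimum of a
`D`-layer deep linear network (`D ≥ 3`).  Here `d 0 = d_x`, `d D = d_y`, `Se = Σ_ε`,
`Sx = Σ_x`, `V' = Σ_ε^{1/2} V Σ_x^{1/2} = L S Rᵀ` is an SVD (`S` diagonal with
nonnegative entries, `LᵀL = RᵀR = I_d`, `Tr S > 0`), the `U i` are semi-orthogonal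
(`U_iᵀU_i = I_d`) and the weights are
`W_D = Σ_ε^{−1/2} L Σ_D U_{D−1}ᵀ`, `W_i = U_i Σ_i U_{i−1}ᵀ`, `W_1 = U_1 Σ_1 Rᵀ Σ_x^{−1/2}`
with the prescribed diagonal factors `Σ_1, Σ_i, Σ_D`.  Then
`T = (D−1)·(Tr S)^{(D−2)/D}·(Tr Σ_ε · Tr Σ_x)^{1/D}·Tr[Σ_ε^{−1} L S Lᵀ]
   + d_y·(Tr S)^{2(D−1)/D}·(Tr Σ_x)^{1/D}/(Tr Σ_ε)^{(D−1)/D}`. -/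
theorem sharpness_at_sgd_minimum (D : ℕ) (hD : 3 ≤ D) (d : ℕ → ℕ) (dd : ℕ)
    (hd0 : 0 < d 0) (hdD : 0 < d D)
    (Se : Matrix (Fin (d D)) (Fin (d D)) ℝ) (hSe : Se.PosDef)
    (Sx : Matrix (Fin (d 0)) (Fin (d 0)) ℝ) (hSx : Sx.PosDef)
    (V : Matrix (Fin (d D)) (Fin (d 0)) ℝ)
    (L : Matrix (Fin (d D)) (Fin dd) ℝ) (R : Matrix (Fin (d 0)) (Fin dd) ℝ)
    (S : Matrix (Fin dd) (Fin dd) ℝ)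
    (hSdiag : ∀ i j, i ≠ j → S i j = 0) (hSnonneg : ∀ i, 0 ≤ S i i)
    (hSVD : Matrix.PosSemidef.sqrt hSe.posSemidef * V * Matrix.PosSemidef.sqrt hSx.posSemidef = L * S * Rᵀ)
    (hL : Lᵀ * L = 1) (hR : Rᵀ * R = 1) (hTrS : 0 < S.trace)
    (U : ∀ i : ℕ, Matrix (Fin (d i)) (Fin dd) ℝ)
    (hU : ∀ i, 1 ≤ i → i ≤ D - 1 → (U i)ᵀ * U i = 1)
    (W : ∀ k, Matrix (Fin (d (k + 1))) (Fin (d k)) ℝ)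
    (hW0 : W 0 =
      U 1 * ((S.trace ^ (-((D : ℝ) - 2) / (2 * D)) * Sx.trace ^ (((D : ℝ) - 1) / (2 * D))
          * Se.trace ^ (-(1 : ℝ) / (2 * D))) • entrywiseSqrt S)
        * Rᵀ * (Matrix.PosSemidef.sqrt hSx.posSemidef)⁻¹)
    (hWmid : ∀ i, 1 ≤ i → i ≤ D - 2 →
      W i = (S.trace ^ ((1 : ℝ) / D) * (Se.trace * Sx.trace) ^ (-(1 : ℝ) / (2 * D))) •
        (U (i + 1) * (U i)ᵀ))
    (hWD : W (D - 1) =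
      ((Matrix.PosSemidef.sqrt hSe.posSemidef)⁻¹ * L *
        ((S.trace ^ (-((D : ℝ) - 2) / (2 * D)) * Se.trace ^ (((D : ℝ) - 1) / (2 * D))
          * Sx.trace ^ (-(1 : ℝ) / (2 * D))) • entrywiseSqrt S)
        * (U (D - 1))ᵀ).submatrix
          (Fin.cast (congrArg d (by omega : D - 1 + 1 = D))) id) :
    sharpnessT d W Sx D =
      ((D : ℝ) - 1) * S.trace ^ (((D : ℝ) - 2) / D)
          * (Se.trace * Sx.trace) ^ ((1 : ℝ) / D) * (Se⁻¹ * (L * S * Lᵀ)).trace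
        + (d D : ℝ) * S.trace ^ (2 * ((D : ℝ) - 1) / D) * Sx.trace ^ ((1 : ℝ) / D)
          / Se.trace ^ (((D : ℝ) - 1) / D) := by
  obtain ⟨n, rfl⟩ : ∃ n, D = n + 3 := ⟨D - 3, by omega⟩
  have hTrSx : 0 < Sx.trace := trace_pos_of_posDef hd0 hSx
  have hTrSe : 0 < Se.trace := trace_pos_of_posDef hdD hSe
  -- entrywise sqrt facts
  have hPP : entrywiseSqrt S * entrywiseSqrt S = S := by
    ext i j
    rw [Matrix.mul_apply, Finset.sum_eq_single j]
    · by_cases h : i = j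
      · subst h; simp [entrywiseSqrt, Real.mul_self_sqrt (hSnonneg i)]
      · simp [entrywiseSqrt, hSdiag i j h]
    · intro k _ hk
      simp [entrywiseSqrt, hSdiag k j hk]
    · simp
  have hPt : (entrywiseSqrt S)ᵀ = entrywiseSqrt S := by
    ext i j
    by_cases h : i = j
    · subst h; rfl
    · simp [entrywiseSqrt, hSdiag i j h, hSdiag j i (Ne.symm h)]
  -- square-root facts
  have hQx1 : (Matrix.PosSemidef.sqrt hSx.posSemidef) * (Matrix.PosSemidef.sqrt hSx.posSemidef) = Sx := psd_sqrt_mul_self hSx.posSemidef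
  have hQx2 : ((Matrix.PosSemidef.sqrt hSx.posSemidef))ᵀ = (Matrix.PosSemidef.sqrt hSx.posSemidef) := by
    exact psd_sqrt_transpose hSx.posSemidef
  have hQxu : IsUnit ((Matrix.PosSemidef.sqrt hSx.posSemidef)).det := by
    have h2 : ((Matrix.PosSemidef.sqrt hSx.posSemidef)).det * ((Matrix.PosSemidef.sqrt hSx.posSemidef)).det = Sx.det := by
      rw [← Matrix.det_mul, hQx1]
    refine isUnit_iff_ne_zero.mpr fun hz => (ne_of_gt hSx.det_pos) ?_
    rw [← h2, hz, mul_zero]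
  have hQe1 : (Matrix.PosSemidef.sqrt hSe.posSemidef) * (Matrix.PosSemidef.sqrt hSe.posSemidef) = Se := psd_sqrt_mul_self hSe.posSemidef
  have hQe2 : ((Matrix.PosSemidef.sqrt hSe.posSemidef))ᵀ = (Matrix.PosSemidef.sqrt hSe.posSemidef) := by
    exact psd_sqrt_transpose hSe.posSemidef
  have hQeinv : ((Matrix.PosSemidef.sqrt hSe.posSemidef))⁻¹ * ((Matrix.PosSemidef.sqrt hSe.posSemidef))⁻¹ = Se⁻¹ :=
    inv_mul_inv_eq Se _ hQe1
  have hXSX : (Rᵀ * ((Matrix.PosSemidef.sqrt hSx.posSemidef))⁻¹) * Sx * (Rᵀ * ((Matrix.PosSemidef.sqrt hSx.posSemidef))⁻¹)ᵀ = 1 :=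
    conj_inv_one Sx _ R hQx1 hQx2 hQxu hR
  -- scalars
  set α := S.trace ^ (-((↑(n + 3) : ℝ) - 2) / (2 * ↑(n + 3)))
      * Sx.trace ^ (((↑(n + 3) : ℝ) - 1) / (2 * ↑(n + 3)))
      * Se.trace ^ (-(1 : ℝ) / (2 * ↑(n + 3))) with hαdef
  set β := S.trace ^ (-((↑(n + 3) : ℝ) - 2) / (2 * ↑(n + 3)))
      * Se.trace ^ (((↑(n + 3) : ℝ) - 1) / (2 * ↑(n + 3)))
      * Sx.trace ^ (-(1 : ℝ) / (2 * ↑(n + 3))) with hβdef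
  set γ := S.trace ^ ((1 : ℝ) / ↑(n + 3))
      * (Se.trace * Sx.trace) ^ (-(1 : ℝ) / (2 * ↑(n + 3))) with hγdef
  have hW0' : W 0 = α • (U 1 * (entrywiseSqrt S * (Rᵀ * ((Matrix.PosSemidef.sqrt hSx.posSemidef))⁻¹))) := by
    rw [hW0]
    simp only [Matrix.smul_mul, Matrix.mul_smul, Matrix.mul_assoc]
  have hWe : W (n + 2) = β • ((((Matrix.PosSemidef.sqrt hSe.posSemidef))⁻¹ * L * entrywiseSqrt S) * (U (n + 2))ᵀ) := by
    have h0 : W (n + 2)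
        = ((Matrix.PosSemidef.sqrt hSe.posSemidef))⁻¹ * L * (β • entrywiseSqrt S) * (U (n + 2))ᵀ := hWD
    rw [h0]
    simp only [Matrix.smul_mul, Matrix.mul_smul]
  have hB : ∀ k, k ≤ n + 1 → prodUpTo d W (k + 1)
      = (α * γ ^ k) • (U (k + 1) * (entrywiseSqrt S * (Rᵀ * ((Matrix.PosSemidef.sqrt hSx.posSemidef))⁻¹))) := by
    intro k
    induction k with
    | zero =>
      intro _
      show W 0 * (1 : Matrix (Fin (d 0)) (Fin (d 0)) ℝ) = _
      rw [Matrix.mul_one, hW0']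
      simp
    | succ k ih =>
      intro hk
      show W (k + 1) * prodUpTo d W (k + 1) = _
      rw [hWmid (k + 1) (by omega) (by omega), ih (by omega), Matrix.smul_mul, Matrix.mul_smul,
        smul_smul, Matrix.mul_assoc, ← Matrix.mul_assoc ((U (k + 1))ᵀ),
        hU (k + 1) (by omega) (by omega), Matrix.one_mul]
      congr 1
      ring
  have hMid : ∀ i l, 1 ≤ i → i + l + 1 ≤ n + 2 → mulChain d W i (l + 1)
      = γ ^ (l + 1) • (U (i + l + 1) * (U i)ᵀ) := by
    intro i l
    induction l with
    | zero =>
      intro h1 h2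
      show W i * (1 : Matrix (Fin (d i)) (Fin (d i)) ℝ) = γ ^ 1 • (U (i + 1) * (U i)ᵀ)
      rw [Matrix.mul_one, hWmid i h1 (by omega), pow_one]
    | succ l ih =>
      intro h1 h2
      have hstep : mulChain d W i (l + 1 + 1)
          = W (i + l + 1) * (γ ^ (l + 1) • (U (i + l + 1) * (U i)ᵀ)) := by
        rw [← ih h1 (by omega)]; rfl
      rw [hstep, hWmid (i + l + 1) (by omega) (by omega), Matrix.smul_mul, Matrix.mul_smul,
        smul_smul, Matrix.mul_assoc, ← Matrix.mul_assoc ((U (i + l + 1))ᵀ),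
        hU (i + l + 1) (by omega) (by omega), Matrix.one_mul]
      congr 1
      · ring
  have hAtr : ∀ k m : ℕ, k + 1 + m = n + 2 →
      ((mulChain d W (k + 1) (m + 1))ᵀ * mulChain d W (k + 1) (m + 1)).trace
        = (β * γ ^ m) ^ 2 * (Se⁻¹ * (L * S * Lᵀ)).trace := by
    intro k m
    cases m with
    | zero =>
      intro hkm
      have ht0 : k + 1 = n + 2 := by omega
      have hUk1 : (U (k + 1))ᵀ * U (k + 1) = 1 := hU (k + 1) (by omega) (by omega)
      have hWt0 : W (k + 1) = β • (((((Matrix.PosSemidef.sqrt hSe.posSemidef))⁻¹ * L * entrywiseSqrt S).submatrix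
          (Fin.cast (congrArg (fun s => d (s + 1)) ht0)) id) * (U (k + 1))ᵀ) := by
        rw [famW_cast d W ht0, hWe]
        rw [show ((β • (((Matrix.PosSemidef.sqrt hSe.posSemidef))⁻¹ * L * entrywiseSqrt S * (U (n + 2))ᵀ)).submatrix
            (Fin.cast (congrArg (fun s => d (s + 1)) ht0)) (Fin.cast (congrArg d ht0)))
          = β • ((((Matrix.PosSemidef.sqrt hSe.posSemidef))⁻¹ * L * entrywiseSqrt S * (U (n + 2))ᵀ).submatrix
            (Fin.cast (congrArg (fun s => d (s + 1)) ht0)) (Fin.cast (congrArg d ht0))) from rfl]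
        rw [submatrix_cast_mul_transpose, ← famU_cast d U ht0]
      have hchain : mulChain d W (k + 1) (0 + 1) = W (k + 1) := by
        show W (k + 1) * (1 : Matrix (Fin (d (k + 1))) (Fin (d (k + 1))) ℝ) = W (k + 1)
        rw [Matrix.mul_one]
      rw [hchain, hWt0, Matrix.transpose_smul, Matrix.smul_mul, Matrix.mul_smul, smul_smul,
        Matrix.trace_smul, submatrix_cast_mul, trace_submatrix_cast,
        trace_G Se _ L (entrywiseSqrt S) S _ hQeinv hQe2 hPt hPP hUk1, smul_eq_mul]
      ring
    | succ m' =>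
      intro hkm
      have ht : k + 1 + m' + 1 = n + 2 := by omega
      have hUk1 : (U (k + 1))ᵀ * U (k + 1) = 1 := hU (k + 1) (by omega) (by omega)
      have hWt : W (k + 1 + m' + 1) = β • (((((Matrix.PosSemidef.sqrt hSe.posSemidef))⁻¹ * L * entrywiseSqrt S).submatrix
          (Fin.cast (congrArg (fun s => d (s + 1)) ht)) id) * (U (k + 1 + m' + 1))ᵀ) := by
        rw [famW_cast d W ht, hWe]
        rw [show ((β • (((Matrix.PosSemidef.sqrt hSe.posSemidef))⁻¹ * L * entrywiseSqrt S * (U (n + 2))ᵀ)).submatrix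
            (Fin.cast (congrArg (fun s => d (s + 1)) ht)) (Fin.cast (congrArg d ht)))
          = β • ((((Matrix.PosSemidef.sqrt hSe.posSemidef))⁻¹ * L * entrywiseSqrt S * (U (n + 2))ᵀ).submatrix
            (Fin.cast (congrArg (fun s => d (s + 1)) ht)) (Fin.cast (congrArg d ht))) from rfl]
        rw [submatrix_cast_mul_transpose, ← famU_cast d U ht]
      have hchain : mulChain d W (k + 1) (m' + 1 + 1)
          = W (k + 1 + m' + 1) * (γ ^ (m' + 1) • (U (k + 1 + m' + 1) * (U (k + 1))ᵀ)) := by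
        rw [← hMid (k + 1) m' (by omega) (by omega)]; rfl
      have hMM : (((((Matrix.PosSemidef.sqrt hSe.posSemidef))⁻¹ * L * entrywiseSqrt S).submatrix
            (Fin.cast (congrArg (fun s => d (s + 1)) ht)) id) * (U (k + 1 + m' + 1))ᵀ)
            * (U (k + 1 + m' + 1) * (U (k + 1))ᵀ)
          = ((((Matrix.PosSemidef.sqrt hSe.posSemidef))⁻¹ * L * entrywiseSqrt S) * (U (k + 1))ᵀ).submatrix
            (Fin.cast (congrArg (fun s => d (s + 1)) ht)) id := by
        rw [Matrix.mul_assoc, ← Matrix.mul_assoc ((U (k + 1 + m' + 1))ᵀ),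
          hU (k + 1 + m' + 1) (by omega) (by omega), Matrix.one_mul, submatrix_cast_mul]
      rw [hchain, hWt]
      simp only [Matrix.smul_mul, Matrix.mul_smul, Matrix.transpose_smul, smul_smul,
        Matrix.trace_smul, smul_eq_mul]
      rw [hMM, trace_submatrix_cast,
        trace_G Se _ L (entrywiseSqrt S) S _ hQeinv hQe2 hPt hPP hUk1]
      ring
  have hBtr : ∀ k, k ≤ n + 1 →
      (prodUpTo d W (k + 1) * Sx * (prodUpTo d W (k + 1))ᵀ).trace
        = (α * γ ^ k) ^ 2 * S.trace := by
    intro k hk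
    rw [hB k hk]
    simp only [Matrix.smul_mul, Matrix.mul_smul, Matrix.transpose_smul, smul_smul,
      Matrix.trace_smul, smul_eq_mul]
    rw [trace_B Sx _ (entrywiseSqrt S) S _ hXSX hPt hPP (hU (k + 1) (by omega) (by omega))]
    ring
  -- scalar exponent identities
  have hex : 0 < Se.trace * Sx.trace := mul_pos hTrSe hTrSx
  have hD0 : ((n : ℝ) + 3) ≠ 0 := by positivity
  have hα : 0 < α := by
    rw [hαdef]
    exact mul_pos (mul_pos (Real.rpow_pos_of_pos hTrS _) (Real.rpow_pos_of_pos hTrSx _))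
      (Real.rpow_pos_of_pos hTrSe _)
  have hβ : 0 < β := by
    rw [hβdef]
    exact mul_pos (mul_pos (Real.rpow_pos_of_pos hTrS _) (Real.rpow_pos_of_pos hTrSe _))
      (Real.rpow_pos_of_pos hTrSx _)
  have hγ : 0 < γ := by
    rw [hγdef]
    exact mul_pos (Real.rpow_pos_of_pos hTrS _) (Real.rpow_pos_of_pos hex _)
  have hlogα : Real.log α
      = -((↑(n + 3) : ℝ) - 2) / (2 * ↑(n + 3)) * Real.log S.trace
        + ((↑(n + 3) : ℝ) - 1) / (2 * ↑(n + 3)) * Real.log Sx.trace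
        + -1 / (2 * ↑(n + 3)) * Real.log Se.trace := by
    rw [hαdef, Real.log_mul (by positivity) (by positivity),
      Real.log_mul (by positivity) (by positivity),
      Real.log_rpow hTrS, Real.log_rpow hTrSx, Real.log_rpow hTrSe]
  have hlogβ : Real.log β
      = -((↑(n + 3) : ℝ) - 2) / (2 * ↑(n + 3)) * Real.log S.trace
        + ((↑(n + 3) : ℝ) - 1) / (2 * ↑(n + 3)) * Real.log Se.trace
        + -1 / (2 * ↑(n + 3)) * Real.log Sx.trace := by
    rw [hβdef, Real.log_mul (by positivity) (by positivity),
      Real.log_mul (by positivity) (by positivity),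
      Real.log_rpow hTrS, Real.log_rpow hTrSe, Real.log_rpow hTrSx]
  have hlogγ : Real.log γ
      = (1 : ℝ) / ↑(n + 3) * Real.log S.trace
        + -1 / (2 * ↑(n + 3)) * (Real.log Se.trace + Real.log Sx.trace) := by
    rw [hγdef, Real.log_mul (by positivity) (by positivity),
      Real.log_rpow hTrS, Real.log_rpow hex, Real.log_mul hTrSe.ne' hTrSx.ne']
  have hK1 : (α * β * γ ^ n) ^ 2 * S.trace
      = S.trace ^ (((↑(n + 3) : ℝ) - 2) / ↑(n + 3))
        * (Se.trace * Sx.trace) ^ ((1 : ℝ) / ↑(n + 3)) := by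
    apply log_eq_imp (by positivity) (by positivity)
    rw [Real.log_mul (by positivity) hTrS.ne', Real.log_pow,
      Real.log_mul (by positivity) (by positivity), Real.log_mul hα.ne' hβ.ne',
      Real.log_pow, hlogα, hlogβ, hlogγ,
      Real.log_mul (by positivity) (by positivity), Real.log_rpow hTrS,
      Real.log_rpow hex, Real.log_mul hTrSe.ne' hTrSx.ne']
    push_cast
    have hinv : ∀ x : ℝ, x / (2 * ((n : ℝ) + 3)) = x / ((n : ℝ) + 3) / 2 := fun x => by
      rw [div_div, mul_comm]
    simp only [hinv]
    linear_combination (-Real.log S.trace) * mul_inv_cancel₀ hD0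
  have hK2 : (β * γ ^ (n + 1)) ^ 2 * Sx.trace
      = S.trace ^ (((↑(n + 3) : ℝ) - 2) / ↑(n + 3))
        * (Se.trace * Sx.trace) ^ ((1 : ℝ) / ↑(n + 3)) := by
    apply log_eq_imp (by positivity) (by positivity)
    rw [Real.log_mul (by positivity) hTrSx.ne', Real.log_pow,
      Real.log_mul hβ.ne' (by positivity), Real.log_pow, hlogβ, hlogγ,
      Real.log_mul (by positivity) (by positivity), Real.log_rpow hTrS,
      Real.log_rpow hex, Real.log_mul hTrSe.ne' hTrSx.ne']
    push_cast
    have hinv : ∀ x : ℝ, x / (2 * ((n : ℝ) + 3)) = x / ((n : ℝ) + 3) / 2 := fun x => by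
      rw [div_div, mul_comm]
    simp only [hinv]
    linear_combination (-Real.log Sx.trace) * mul_inv_cancel₀ hD0
  have hK3 : (α * γ ^ (n + 1)) ^ 2 * S.trace
      = S.trace ^ (2 * ((↑(n + 3) : ℝ) - 1) / ↑(n + 3)) * Sx.trace ^ ((1 : ℝ) / ↑(n + 3))
        / Se.trace ^ (((↑(n + 3) : ℝ) - 1) / ↑(n + 3)) := by
    apply log_eq_imp (by positivity) (by positivity)
    rw [Real.log_mul (by positivity) hTrS.ne', Real.log_pow,
      Real.log_mul hα.ne' (by positivity), Real.log_pow, hlogα, hlogγ,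
      Real.log_div (by positivity) (by positivity),
      Real.log_mul (by positivity) (by positivity),
      Real.log_rpow hTrS, Real.log_rpow hTrSx, Real.log_rpow hTrSe]
    push_cast
    have hinv : ∀ x : ℝ, x / (2 * ((n : ℝ) + 3)) = x / ((n : ℝ) + 3) / 2 := fun x => by
      rw [div_div, mul_comm]
    simp only [hinv]
    linear_combination (-Real.log S.trace) * mul_inv_cancel₀ hD0
  unfold sharpnessT
  rw [Finset.sum_range_succ, Finset.sum_range_succ']
  have hmidterm : ∀ x ∈ Finset.range (n + 1),
      ((mulChain d W (x + 1 + 1) (n + 3 - (x + 1 + 1)))ᵀ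
          * mulChain d W (x + 1 + 1) (n + 3 - (x + 1 + 1))).trace
        * (prodUpTo d W (x + 1) * Sx * (prodUpTo d W (x + 1))ᵀ).trace
      = (α * β * γ ^ n) ^ 2 * S.trace * (Se⁻¹ * (L * S * Lᵀ)).trace := by
    intro x hx
    have hxn : x ≤ n := Nat.lt_succ_iff.mp (Finset.mem_range.mp hx)
    rw [show n + 3 - (x + 1 + 1) = (n - x) + 1 from by omega,
      hAtr (x + 1) (n - x) (by omega), hBtr x (by omega)]
    have hpow : γ ^ (n - x) * γ ^ x = γ ^ n := by
      rw [← pow_add]; congr 1; omega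
    rw [← hpow]; ring
  rw [Finset.sum_congr rfl hmidterm, Finset.sum_const, Finset.card_range, nsmul_eq_mul]
  rw [show n + 3 - (0 + 1) = (n + 1) + 1 from by omega, hAtr 0 (n + 1) (by omega)]
  rw [show prodUpTo d W 0 = (1 : Matrix (Fin (d 0)) (Fin (d 0)) ℝ) from rfl,
    Matrix.one_mul, Matrix.transpose_one, Matrix.mul_one]
  rw [show n + 3 - (n + 2 + 1) = 0 from by omega]
  rw [show mulChain d W (n + 2 + 1) 0
      = (1 : Matrix (Fin (d (n + 2 + 1))) (Fin (d (n + 2 + 1))) ℝ) from rfl,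
    Matrix.transpose_one, Matrix.one_mul, Matrix.trace_one]
  rw [show prodUpTo d W (n + 2) = prodUpTo d W (n + 1 + 1) from rfl, hBtr (n + 1) (le_refl _)]
  rw [show (Fintype.card (Fin (d (n + 2 + 1))) : ℝ) = ((d (n + 3) : ℕ) : ℝ) from by rw [Fintype.card_fin]]
  push_cast at hK1 hK2 hK3 ⊢
  linear_combination ((n : ℝ) + 1) * (Se⁻¹ * (L * S * Lᵀ)).trace * hK1
    + (Se⁻¹ * (L * S * Lᵀ)).trace * hK2 + ((d (n + 3) : ℝ)) * hK3
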